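/- arXiv:1809.04065 — 2 statements merged into one kernel-verified Lean document; each statement's English description precedes it below -/
import Mathlib

section
/- Let f = Σ_{i∈ℤ} a_i t^i be an element of the Robba ring over K (a complete discretely valued field of mixed characteristic (0,p)), and let λ ≥ 0 be a real number. Then the following are equivalent: (i) there exist r' > 0 and a constant C such that r^λ |f|_r ≤ C for all r ∈ (0, r'], where |f|_r = sup_i |a_i| e^{-ri}; (ii) |a_i| = O(i^λ) as i → +∞. -/
/-!
Taylor expansion criterion for log-growth on the Robba ring (Lemma `Taylor`):
for `f = Σ_{i∈ℤ} a_i t^i ∈ 𝓡` and `λ ≥ 0`, `r^λ |f|_r` is bounded as `r → 0+`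
iff `|a_i| = O(i^λ)` as `i → +∞`.
-/

open Filter

namespace Stmt0

variable {K : Type*} [NontriviallyNormedField K]

/-- Membership in `𝓡^r`, the ring of analytic functions on `e^{-r} ≤ |t| < 1`:
`|a_i| e^{-s i} → 0` as `i → ±∞` for every `s ∈ (0, r]`. -/
def RobbaMem (a : ℤ → K) (r : ℝ) : Prop :=
  ∀ s ∈ Set.Ioc (0 : ℝ) r,
    Tendsto (fun i : ℤ => ‖a i‖ * Real.exp (-s * (i : ℝ))) (cocompact ℤ) (nhds 0)

/-- The norm `|f|_r = sup_{i∈ℤ} |a_i| e^{-ri}`. -/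
noncomputable def gnorm (a : ℤ → K) (r : ℝ) : ℝ :=
  ⨆ i : ℤ, ‖a i‖ * Real.exp (-r * (i : ℝ))

/-- The elementary calculus bound `x^λ e^{-x} ≤ max 1 (λ^λ)` for `x ≥ 0`. -/
lemma rpow_mul_exp_neg_le {lam : ℝ} (hlam : 0 ≤ lam) {x : ℝ} (hx : 0 ≤ x) :
    x ^ lam * Real.exp (-x) ≤ max 1 (lam ^ lam) := by
  rcases eq_or_lt_of_le hlam with h0 | hpos
  · rw [← h0, Real.rpow_zero, one_mul]
    exact le_max_of_le_left (Real.exp_le_one_iff.2 (by linarith))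
  rcases eq_or_lt_of_le hx with hx0 | hxpos
  · rw [← hx0, Real.zero_rpow (ne_of_gt hpos), zero_mul]
    positivity
  · refine le_max_of_le_right ?_
    rw [Real.rpow_def_of_pos hxpos, Real.rpow_def_of_pos hpos, ← Real.exp_add]
    apply Real.exp_le_exp.2
    have h3 : Real.log x - Real.log lam ≤ x / lam - 1 := by
      rw [← Real.log_div (ne_of_gt hxpos) (ne_of_gt hpos)]
      exact Real.log_le_sub_one_of_pos (div_pos hxpos hpos)
    have h4 : lam * (Real.log x - Real.log lam) ≤ lam * (x / lam - 1) :=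
      mul_le_mul_of_nonneg_left h3 hlam
    have h5 : lam * (x / lam - 1) = x - lam := by field_simp
    nlinarith [h4, h5, hlam]

/-- Taylor expansion criterion for log-growth `λ`. -/
theorem taylor_expansion_criterion [CompleteSpace K] [IsUltrametricDist K]
    (a : ℤ → K) (hf : ∃ r > 0, RobbaMem a r) (lam : ℝ) (hlam : 0 ≤ lam) :
    (∃ r' > 0, ∃ C : ℝ, ∀ r ∈ Set.Ioc (0 : ℝ) r', r ^ lam * gnorm a r ≤ C) ↔
      ∃ C : ℝ, ∀ᶠ i : ℤ in atTop, ‖a i‖ ≤ C * (i : ℝ) ^ lam := by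
  obtain ⟨r0, hr0, hmem⟩ := hf
  constructor
  · rintro ⟨r', hr'pos, C, hC⟩
    refine ⟨C * Real.exp 1, eventually_atTop.2 ⟨max 1 (max ⌈1/r'⌉ ⌈1/r0⌉), fun i hi => ?_⟩⟩
    have hi1 : (1:ℤ) ≤ i := le_trans (le_max_left _ _) hi
    have hipos : (0:ℝ) < (i:ℝ) := by exact_mod_cast lt_of_lt_of_le zero_lt_one hi1
    set r : ℝ := 1 / (i:ℝ) with hrdef
    have hrpos : 0 < r := by positivity
    have hir' : 1/r' ≤ (i:ℝ) := by
      calc 1/r' ≤ (⌈1/r'⌉ : ℝ) := Int.le_ceil _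
        _ ≤ (i:ℝ) := by
          exact_mod_cast le_trans (le_trans (le_max_left _ _) (le_max_right 1 _)) hi
    have hir0 : 1/r0 ≤ (i:ℝ) := by
      calc 1/r0 ≤ (⌈1/r0⌉ : ℝ) := Int.le_ceil _
        _ ≤ (i:ℝ) := by
          exact_mod_cast le_trans (le_trans (le_max_right _ _) (le_max_right 1 _)) hi
    have hrr' : r ≤ r' := (one_div_le hipos hr'pos).2 hir'
    have hrr0 : r ≤ r0 := (one_div_le hipos hr0).2 hir0
    have ht := hmem r ⟨hrpos, hrr0⟩
    rw [cocompact_eq_cofinite] at ht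
    have hb : BddAbove (Set.range fun j : ℤ => ‖a j‖ * Real.exp (-r * (j:ℝ))) :=
      ht.bddAbove_range_of_cofinite
    have hterm : ‖a i‖ * Real.exp (-r * (i:ℝ)) ≤ gnorm a r := le_ciSup hb i
    have hri : r * (i:ℝ) = 1 := by rw [hrdef]; field_simp
    have hCr := hC r ⟨hrpos, hrr'⟩
    have hrl : 0 < r ^ lam := Real.rpow_pos_of_pos hrpos lam
    have hg : gnorm a r ≤ C / r ^ lam := (le_div_iff₀ hrl).2 (by linarith [hCr])
    have hrval : r ^ lam = ((i:ℝ) ^ lam)⁻¹ := by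
      rw [hrdef, one_div, Real.inv_rpow hipos.le]
    have hil : 0 < (i:ℝ) ^ lam := Real.rpow_pos_of_pos hipos lam
    have hCr2 : C / r ^ lam = C * (i:ℝ) ^ lam := by
      rw [hrval, div_eq_mul_inv, inv_inv]
    have h6 : ‖a i‖ * Real.exp (-1) ≤ C * (i:ℝ) ^ lam := by
      have : Real.exp (-r * (i:ℝ)) = Real.exp (-1) := by rw [neg_mul, hri]
      rw [← this]
      exact hterm.trans (hg.trans_eq hCr2)
    have h8 : Real.exp (-1) * Real.exp 1 = 1 := by rw [← Real.exp_add]; norm_num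
    calc ‖a i‖ = ‖a i‖ * (Real.exp (-1) * Real.exp 1) := by rw [h8, mul_one]
      _ = ‖a i‖ * Real.exp (-1) * Real.exp 1 := by ring
      _ ≤ C * (i:ℝ) ^ lam * Real.exp 1 := mul_le_mul_of_nonneg_right h6 (Real.exp_pos 1).le
      _ = C * Real.exp 1 * (i:ℝ) ^ lam := by ring
  · rintro ⟨C, hC⟩
    obtain ⟨N, hN⟩ := eventually_atTop.1 hC
    set N' : ℤ := max N 1 with hN'def
    have ht := hmem r0 ⟨hr0, le_refl r0⟩
    rw [cocompact_eq_cofinite] at ht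
    obtain ⟨M1, hM1⟩ := ht.bddAbove_range_of_cofinite
    have hM1' : ∀ j : ℤ, ‖a j‖ * Real.exp (-r0 * (j:ℝ)) ≤ M1 :=
      fun j => hM1 (Set.mem_range_self j)
    have hM1nn : 0 ≤ M1 := le_trans (by positivity) (hM1' 0)
    have hne : (Finset.Icc (0:ℤ) N').Nonempty :=
      ⟨0, Finset.mem_Icc.2 ⟨le_refl 0, le_trans zero_le_one (le_max_right N 1)⟩⟩
    set M0 : ℝ := (Finset.Icc (0:ℤ) N').sup' hne (fun j => ‖a j‖) with hM0def
    have hM0 : ∀ j ∈ Finset.Icc (0:ℤ) N', ‖a j‖ ≤ M0 := fun j hj => Finset.le_sup' (fun j : ℤ => ‖a j‖) hj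
    have hM0nn : 0 ≤ M0 := le_trans (norm_nonneg (a 0)) (hM0 0 (Finset.mem_Icc.2 ⟨le_refl 0, le_trans zero_le_one (le_max_right N 1)⟩))
    set C' : ℝ := max C 0 with hC'def
    set D : ℝ := max 1 (lam ^ lam) with hDdef
    have hC'nn : 0 ≤ C' := le_max_right _ _
    refine ⟨min r0 1, by positivity, max (max M0 M1) (C' * D), fun r hr => ?_⟩
    obtain ⟨hrpos, hrle⟩ := hr
    have hrr0 : r ≤ r0 := hrle.trans (min_le_left _ _)
    have hr1 : r ≤ 1 := hrle.trans (min_le_right _ _)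
    have hrl1 : r ^ lam ≤ 1 := Real.rpow_le_one hrpos.le hr1 hlam
    have hrlnn : 0 ≤ r ^ lam := (Real.rpow_pos_of_pos hrpos lam).le
    rw [gnorm, Real.mul_iSup_of_nonneg hrlnn]
    refine ciSup_le fun i => ?_
    by_cases hiN : N' ≤ i
    · have hi1 : (1:ℤ) ≤ i := le_trans (le_max_right N 1) hiN
      have hiR : (0:ℝ) < (i:ℝ) := by exact_mod_cast lt_of_lt_of_le zero_lt_one hi1
      have hil : 0 ≤ (i:ℝ) ^ lam := Real.rpow_nonneg hiR.le lam
      have ha : ‖a i‖ ≤ C' * (i:ℝ) ^ lam :=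
        (hN i (le_trans (le_max_left N 1) hiN)).trans
          (mul_le_mul_of_nonneg_right (le_max_left C 0) hil)
      have key : (r * (i:ℝ)) ^ lam * Real.exp (-(r * (i:ℝ))) ≤ D :=
        rpow_mul_exp_neg_le hlam (by positivity)
      calc r ^ lam * (‖a i‖ * Real.exp (-r * (i:ℝ)))
          ≤ r ^ lam * (C' * (i:ℝ) ^ lam * Real.exp (-r * (i:ℝ))) := by
            apply mul_le_mul_of_nonneg_left _ hrlnn
            exact mul_le_mul_of_nonneg_right ha (Real.exp_pos _).le
        _ = C' * ((r * (i:ℝ)) ^ lam * Real.exp (-(r * (i:ℝ)))) := by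
            rw [Real.mul_rpow hrpos.le hiR.le, neg_mul]; ring
        _ ≤ C' * D := mul_le_mul_of_nonneg_left key hC'nn
        _ ≤ max (max M0 M1) (C' * D) := le_max_right _ _
    · push_neg at hiN
      by_cases hi0 : 0 ≤ i
      · have hai : ‖a i‖ ≤ M0 := hM0 i (Finset.mem_Icc.2 ⟨hi0, hiN.le⟩)
        have hiR : (0:ℝ) ≤ (i:ℝ) := by exact_mod_cast hi0
        have hexp : Real.exp (-r * (i:ℝ)) ≤ 1 :=
          Real.exp_le_one_iff.2 (by nlinarith)
        calc r ^ lam * (‖a i‖ * Real.exp (-r * (i:ℝ)))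
            ≤ 1 * (M0 * 1) :=
              mul_le_mul hrl1 (mul_le_mul hai hexp (Real.exp_pos _).le hM0nn)
                (by positivity) zero_le_one
          _ = M0 := by ring
          _ ≤ max (max M0 M1) (C' * D) := le_trans (le_max_left _ _) (le_max_left _ _)
      · push_neg at hi0
        have hiR : (i:ℝ) < 0 := by exact_mod_cast hi0
        have hexp : Real.exp (-r * (i:ℝ)) ≤ Real.exp (-r0 * (i:ℝ)) := by
          apply Real.exp_le_exp.2
          nlinarith [mul_nonpos_of_nonneg_of_nonpos (sub_nonneg.2 hrr0) hiR.le]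
        have hterm : ‖a i‖ * Real.exp (-r * (i:ℝ)) ≤ M1 :=
          le_trans (mul_le_mul_of_nonneg_left hexp (norm_nonneg _)) (hM1' i)
        calc r ^ lam * (‖a i‖ * Real.exp (-r * (i:ℝ)))
            ≤ 1 * M1 := mul_le_mul hrl1 hterm (by positivity) zero_le_one
          _ = M1 := one_mul _
          _ ≤ max (max M0 M1) (C' * D) := le_trans (le_max_right _ _) (le_max_left _ _)

end Stmt0
end

section
/- Let F be a complete discrete valuation field with an isometric ring endomorphism φ, and let M, N be φ-modules over F (finite free F-modules with a φ-semilinear automorphism). If the Frobenius slope multisets of M and N are disjoint, then every F-linear φ-equivariant map from M to N is zero. -/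
/-!
Lemma `slopehom`: if the Frobenius slope multisets of two `φ`-modules `M`, `N`
over a complete discretely valued field `F` are disjoint, then every
`φ`-equivariant `F`-linear map `M → N` is zero.
-/

namespace Stmt7

open Filter

/-- The sup norm on a vector space with respect to a fixed basis
(used to define the spectral radius; the latter is independent of this choice). -/
noncomputable def supNorm (F : Type*) [NontriviallyNormedField F]
    {M : Type*} [AddCommGroup M] [Module F M] (v : M) : ℝ :=
  ⨆ i, ‖(Module.Basis.ofVectorSpace F M).repr v i‖

/-- The operator norm `sup_{v ≠ 0} ‖f v‖ / ‖v‖` with respect to the sup norm. -/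
noncomputable def opN (F : Type*) [NontriviallyNormedField F]
    {M : Type*} [AddCommGroup M] [Module F M] (f : M → M) : ℝ :=
  ⨆ v : M, supNorm F (f v) / supNorm F v

/-- The spectral radius `|f|_sp = lim_n ‖f^n‖^{1/n}` of an endomorphism. -/
noncomputable def spRad (F : Type*) [NontriviallyNormedField F]
    {M : Type*} [AddCommGroup M] [Module F M] (f : M → M) : ℝ :=
  Filter.limsup (fun n : ℕ => (opN F (f^[n])) ^ ((n : ℝ)⁻¹)) atTop

/-- A `φ`-module structure over `F`: a `φ`-semilinear endomorphism `f` of a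
finite free module whose linearization `φ*M → M` is an isomorphism
(equivalently, for a field `F`, whose range spans `M`). -/
structure IsPhiModule {F : Type*} [NontriviallyNormedField F] (φ : F →+* F)
    {M : Type*} [AddCommGroup M] [Module F M] (f : M → M) : Prop where
  map_add : ∀ x y, f (x + y) = f x + f y
  map_smul : ∀ (c : F) (x : M), f (c • x) = φ c • f x
  span_range : Submodule.span F (Set.range f) = ⊤

/-- The dual Frobenius structure on `M∨`, characterized by
`(g ψ)(f m) = φ (ψ m)` together with `φ`-semilinearity. -/
def IsDualFrob {F : Type*} [NontriviallyNormedField F] (φ : F →+* F)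
    {M : Type*} [AddCommGroup M] [Module F M]
    (f : M → M) (g : Module.Dual F M → Module.Dual F M) : Prop :=
  (∀ x y, g (x + y) = g x + g y) ∧
  (∀ (c : F) (x : Module.Dual F M), g (c • x) = φ c • g x) ∧
  (∀ (ψ : Module.Dual F M) (m : M), g ψ (f m) = φ (ψ m))

/-- `(M, f)` is pure of Frobenius slope `lam`:
`|φ|_{sp,M} = |q|^lam` and `|φ|_{sp,M∨} = |q|^{-lam}`, where `qn = |q|`. -/
def IsPureOfSlope {F : Type*} [NontriviallyNormedField F] (φ : F →+* F) (qn : ℝ)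
    {M : Type*} [AddCommGroup M] [Module F M] (f : M → M) (lam : ℝ) : Prop :=
  spRad F f = qn ^ lam ∧
  ∀ g : Module.Dual F M → Module.Dual F M, IsDualFrob φ f g → spRad F g = qn ^ (-lam)

/-- The subquotient `N₂/N₁` (for `f`-stable `N₁ ≤ N₂`) is pure of slope `lam`:
any induced endomorphism of `N₂ ⧸ N₁` is pure of slope `lam`. -/
def SubquotPure {F : Type*} [NontriviallyNormedField F] (φ : F →+* F) (qn : ℝ)
    {M : Type*} [AddCommGroup M] [Module F M] (f : M → M)
    (N₁ N₂ : Submodule F M) (lam : ℝ) : Prop :=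
  ∀ g : (↥N₂ ⧸ Submodule.comap N₂.subtype N₁) → (↥N₂ ⧸ Submodule.comap N₂.subtype N₁),
    (∀ x y : N₂, f (x : M) = (y : M) →
      g (Submodule.Quotient.mk x) = Submodule.Quotient.mk y) →
    IsPureOfSlope φ qn g lam

/-- `S` is the Frobenius slope multiset of `(M, f)`: the multiset of slopes of
the Jordan–Hölder constituents, counted with multiplicity `dim` of the
constituents. -/
def IsSlopeMultiset {F : Type*} [NontriviallyNormedField F] (φ : F →+* F) (qn : ℝ)
    {M : Type*} [AddCommGroup M] [Module F M] (f : M → M) (S : Multiset ℝ) : Prop :=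
  ∃ (n : ℕ) (N : Fin (n + 1) → Submodule F M) (lam : Fin n → ℝ),
    N 0 = ⊥ ∧ N (Fin.last n) = ⊤ ∧
    (∀ i : Fin n, N i.castSucc ≤ N i.succ) ∧
    (∀ i : Fin (n + 1), ∀ x ∈ N i, f x ∈ N i) ∧
    (∀ i : Fin n, SubquotPure φ qn f (N i.castSucc) (N i.succ) (lam i)) ∧
    (∀ i : Fin n, ∀ P : Submodule F M,
      N i.castSucc ≤ P → P ≤ N i.succ → (∀ x ∈ P, f x ∈ P) →
      P = N i.castSucc ∨ P = N i.succ) ∧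
    S = Finset.univ.sum fun i : Fin n =>
      Multiset.replicate
        (Module.finrank F
          (↥(N i.succ) ⧸ Submodule.comap (N i.succ).subtype (N i.castSucc)))
        (lam i)

/-- `S` is the Frobenius slope filtration of `(M, f)`: an increasing,
exhaustive, separated, right continuous filtration by `φ`-submodules whose
nonzero graded pieces are pure of slope `λ` with `λ ∈ ℚ`. -/
def IsSlopeFiltration {F : Type*} [NontriviallyNormedField F] (φ : F →+* F) (qn : ℝ)
    {M : Type*} [AddCommGroup M] [Module F M] (f : M → M)
    (S : ℝ → Submodule F M) : Prop :=
  Monotone S ∧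
  (∀ lam : ℝ, ∀ x ∈ S lam, f x ∈ S lam) ∧
  (⨆ lam : ℝ, S lam) = ⊤ ∧
  (⨅ lam : ℝ, S lam) = ⊥ ∧
  (∀ lam : ℝ, S lam = ⨅ (μ : ℝ) (_ : lam < μ), S μ) ∧
  (∀ lam : ℝ, (⨆ (μ : ℝ) (_ : μ < lam), S μ) ≠ S lam →
    (∃ rq : ℚ, (rq : ℝ) = lam) ∧
    SubquotPure φ qn f (⨆ (μ : ℝ) (_ : μ < lam), S μ) (S lam) lam)

set_option linter.unusedSectionVars false

section SupNorm
variable (F : Type*) [NontriviallyNormedField F]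
variable {M : Type*} [AddCommGroup M] [Module F M] [FiniteDimensional F M]

lemma supNorm_nonneg (v : M) : 0 ≤ supNorm F v :=
  Real.iSup_nonneg fun _ => norm_nonneg _

lemma coord_le_supNorm (v : M) (i : Module.Basis.ofVectorSpaceIndex F M) :
    ‖(Module.Basis.ofVectorSpace F M).repr v i‖ ≤ supNorm F v := by
  exact le_ciSup (f := fun j => ‖(Module.Basis.ofVectorSpace F M).repr v j‖)
    (Set.Finite.bddAbove (Set.finite_range _)) i

lemma supNorm_le {v : M} {a : ℝ} (ha : 0 ≤ a)
    (h : ∀ i, ‖(Module.Basis.ofVectorSpace F M).repr v i‖ ≤ a) : supNorm F v ≤ a :=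
  Real.iSup_le h ha

lemma supNorm_zero : supNorm F (0 : M) = 0 :=
  le_antisymm (supNorm_le F le_rfl (by simp)) (supNorm_nonneg F 0)

lemma supNorm_pos {v : M} (hv : v ≠ 0) : 0 < supNorm F v := by
  have h : (Module.Basis.ofVectorSpace F M).repr v ≠ 0 := by
    simpa using (Module.Basis.ofVectorSpace F M).repr.map_ne_zero_iff.mpr hv
  obtain ⟨i, hi⟩ := Finsupp.ne_iff.mp h
  calc (0:ℝ) < ‖(Module.Basis.ofVectorSpace F M).repr v i‖ := by simpa [norm_pos_iff] using hi
    _ ≤ _ := coord_le_supNorm F v i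

lemma supNorm_eq_zero_iff {v : M} : supNorm F v = 0 ↔ v = 0 := by
  constructor
  · intro h; by_contra hv; exact absurd h (ne_of_gt (supNorm_pos F hv))
  · rintro rfl; exact supNorm_zero F

lemma supNorm_add_le (x y : M) : supNorm F (x + y) ≤ supNorm F x + supNorm F y := by
  refine supNorm_le F (add_nonneg (supNorm_nonneg F x) (supNorm_nonneg F y)) fun i => ?_
  rw [map_add]
  exact le_trans (norm_add_le _ _)
    (add_le_add (coord_le_supNorm F x i) (coord_le_supNorm F y i))

lemma supNorm_smul_le (c : F) (x : M) : supNorm F (c • x) ≤ ‖c‖ * supNorm F x := by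
  refine supNorm_le F (mul_nonneg (norm_nonneg c) (supNorm_nonneg F x)) fun i => ?_
  rw [map_smul]
  simpa using mul_le_mul_of_nonneg_left (coord_le_supNorm F x i) (norm_nonneg c)

lemma supNorm_sum_le {ι : Type*} (s : Finset ι) (u : ι → M) :
    supNorm F (∑ i ∈ s, u i) ≤ ∑ i ∈ s, supNorm F (u i) := by
  classical
  induction s using Finset.cons_induction with
  | empty => simp [supNorm_zero F]
  | cons a t ha ih =>
      rw [Finset.sum_cons, Finset.sum_cons]
      exact le_trans (supNorm_add_le F _ _) (add_le_add_right ih _)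
end SupNorm

section OpN
variable (F : Type*) [NontriviallyNormedField F]
variable {M : Type*} [AddCommGroup M] [Module F M] [FiniteDimensional F M]

lemma opN_nonneg (f : M → M) : 0 ≤ opN F f :=
  Real.iSup_nonneg fun v => div_nonneg (supNorm_nonneg F _) (supNorm_nonneg F _)

lemma ratio_le {f : M → M} {A : ℝ} (hA : 0 ≤ A)
    (h : ∀ v, supNorm F (f v) ≤ A * supNorm F v) (v : M) :
    supNorm F (f v) / supNorm F v ≤ A := by
  rcases (supNorm_nonneg F v).eq_or_lt with h0 | hpos
  · have h1 : supNorm F (f v) ≤ 0 := by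
      have := h v; rw [← h0] at this; simpa using this
    have h2 : supNorm F (f v) = 0 := le_antisymm h1 (supNorm_nonneg F _)
    simp [h2, hA]
  · rw [div_le_iff₀ hpos]; exact h v

lemma opN_le {f : M → M} {A : ℝ} (hA : 0 ≤ A)
    (h : ∀ v, supNorm F (f v) ≤ A * supNorm F v) : opN F f ≤ A :=
  Real.iSup_le (ratio_le F hA h) hA

lemma le_opN {f : M → M} {A : ℝ} (hA : 0 ≤ A)
    (h : ∀ v, supNorm F (f v) ≤ A * supNorm F v) (v : M) :
    supNorm F (f v) ≤ opN F f * supNorm F v := by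
  rcases (supNorm_nonneg F v).eq_or_lt with h0 | hpos
  · have h1 : supNorm F (f v) ≤ 0 := by
      have := h v; rw [← h0] at this; simpa using this
    calc supNorm F (f v) ≤ 0 := h1
      _ = opN F f * supNorm F v := by rw [← h0, mul_zero]
  · have hle : supNorm F (f v) / supNorm F v ≤ opN F f := by
      refine le_ciSup (f := fun w => supNorm F (f w) / supNorm F w) ⟨A, ?_⟩ v
      rintro x ⟨w, rfl⟩
      exact ratio_le F hA h w
    calc supNorm F (f v) = supNorm F (f v) / supNorm F v * supNorm F v := by
          field_simp
      _ ≤ opN F f * supNorm F v := mul_le_mul_of_nonneg_right hle hpos.le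

lemma map_finsetSum {M N : Type*} [AddCommGroup M] [AddCommGroup N] {f : M → N}
    (hadd : ∀ x y, f (x + y) = f x + f y)
    {ι : Type*} (s : Finset ι) (u : ι → M) :
    f (∑ i ∈ s, u i) = ∑ i ∈ s, f (u i) := by
  classical
  have h0 : f 0 = 0 := by
    have := hadd 0 0
    simpa using this.symm
  induction s using Finset.cons_induction with
  | empty => simpa using h0
  | cons a t ha ih => rw [Finset.sum_cons, Finset.sum_cons, hadd, ih]

lemma exists_bound {N : Type*} [AddCommGroup N] [Module F N] [FiniteDimensional F N]
    (f : M → N) (ψ : F → F)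
    (hadd : ∀ x y, f (x + y) = f x + f y)
    (hsmul : ∀ (c : F) (x : M), f (c • x) = ψ c • f x)
    (hψ : ∀ c, ‖ψ c‖ ≤ ‖c‖) :
    ∃ A, 0 ≤ A ∧ ∀ v, supNorm F (f v) ≤ A * supNorm F v := by
  classical
  set b := Module.Basis.ofVectorSpace F M with hb
  refine ⟨∑ i, supNorm F (f (b i)), Finset.sum_nonneg fun i _ => supNorm_nonneg F _, fun v => ?_⟩
  have hv : f v = ∑ i, ψ (b.repr v i) • f (b i) := by
    conv_lhs => rw [← b.sum_repr v]
    rw [map_finsetSum hadd]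
    exact Finset.sum_congr rfl fun i _ => hsmul _ _
  rw [hv]
  calc supNorm F (∑ i, ψ (b.repr v i) • f (b i))
      ≤ ∑ i, supNorm F (ψ (b.repr v i) • f (b i)) := supNorm_sum_le F _ _
    _ ≤ ∑ i, supNorm F (f (b i)) * supNorm F v := by
        refine Finset.sum_le_sum fun i _ => ?_
        calc supNorm F (ψ (b.repr v i) • f (b i))
            ≤ ‖ψ (b.repr v i)‖ * supNorm F (f (b i)) := supNorm_smul_le F _ _
          _ ≤ ‖b.repr v i‖ * supNorm F (f (b i)) :=
              mul_le_mul_of_nonneg_right (hψ _) (supNorm_nonneg F _)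
          _ ≤ supNorm F v * supNorm F (f (b i)) :=
              mul_le_mul_of_nonneg_right (coord_le_supNorm F v i) (supNorm_nonneg F _)
          _ = supNorm F (f (b i)) * supNorm F v := mul_comm _ _
    _ = (∑ i, supNorm F (f (b i))) * supNorm F v := by rw [← Finset.sum_mul]
end OpN

section Limsup
open Filter Topology

lemma limsup_rpow_le (a b : ℕ → ℝ) (ha : ∀ n, 0 ≤ a n) (hb : ∀ n, 0 ≤ b n)
    (C : ℝ) (hC : 1 ≤ C) (hab : ∀ n, a n ≤ C * b n)
    (D : ℝ) (hD : 1 ≤ D) (hbD : ∀ n, b n ≤ D ^ n) :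
    limsup (fun n : ℕ => a n ^ ((n : ℝ)⁻¹)) atTop ≤
      limsup (fun n : ℕ => b n ^ ((n : ℝ)⁻¹)) atTop := by
  have hC0 : (0:ℝ) < C := lt_of_lt_of_le one_pos hC
  have hD0 : (0:ℝ) ≤ D := le_trans zero_le_one hD
  set A : ℕ → ℝ := fun n => a n ^ ((n : ℝ)⁻¹) with hA
  set B : ℕ → ℝ := fun n => b n ^ ((n : ℝ)⁻¹) with hB
  have hA0 : ∀ n, 0 ≤ A n := fun n => Real.rpow_nonneg (ha n) _
  have hB0 : ∀ n, 0 ≤ B n := fun n => Real.rpow_nonneg (hb n) _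
  have pow_bound : ∀ (E : ℝ), 1 ≤ E → ∀ (c : ℕ → ℝ), (∀ n, 0 ≤ c n) →
      (∀ n, 1 ≤ n → c n ≤ E ^ n) → ∀ n : ℕ, c n ^ ((n : ℝ)⁻¹) ≤ E := by
    intro E hE c hc0 hcE n
    rcases Nat.eq_zero_or_pos n with rfl | hn
    · simp [hE]
    · have hn0 : ((n : ℝ)) ≠ 0 := Nat.cast_ne_zero.mpr hn.ne'
      have hE0 : (0:ℝ) ≤ E := le_trans zero_le_one hE
      calc c n ^ ((n : ℝ)⁻¹) ≤ (E ^ n) ^ ((n : ℝ)⁻¹) :=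
            Real.rpow_le_rpow (hc0 n) (hcE n hn) (by positivity)
        _ = E := by
            rw [← Real.rpow_natCast E n, ← Real.rpow_mul hE0,
              mul_inv_cancel₀ hn0, Real.rpow_one]
  have hBD : ∀ n, B n ≤ D := pow_bound D hD b hb (fun n _ => hbD n)
  have haCD : ∀ n, 1 ≤ n → a n ≤ (C * D) ^ n := by
    intro n hn
    calc a n ≤ C * b n := hab n
      _ ≤ C * D ^ n := mul_le_mul_of_nonneg_left (hbD n) hC0.le
      _ ≤ C ^ n * D ^ n :=
          mul_le_mul_of_nonneg_right (le_self_pow₀ hC (Nat.one_le_iff_ne_zero.mp hn)) (by positivity)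
      _ = (C * D) ^ n := (mul_pow C D n).symm
  have hACD : ∀ n, A n ≤ C * D := pow_bound (C * D) (one_le_mul_of_one_le_of_one_le hC hD) a ha haCD
  have hBbdd : IsBoundedUnder (· ≤ ·) atTop B := ⟨D, Filter.eventually_map.mpr (Filter.Eventually.of_forall hBD)⟩
  have hAbdd : IsBoundedUnder (· ≤ ·) atTop A := ⟨C * D, Filter.eventually_map.mpr (Filter.Eventually.of_forall hACD)⟩
  have hAcob : IsCoboundedUnder (· ≤ ·) atTop A :=
    (IsBoundedUnder.isCoboundedUnder_le ⟨(0:ℝ), Filter.eventually_map.mpr (Filter.Eventually.of_forall hA0)⟩)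
  have hLB0 : 0 ≤ limsup B atTop :=
    le_limsup_of_frequently_le ((Filter.Eventually.of_forall hB0).frequently) hBbdd
  have key : ∀ ε : ℝ, 0 < ε → limsup A atTop ≤ (1 + ε) * (limsup B atTop + ε) := by
    intro ε hε
    have h1 : Tendsto (fun n : ℕ => C ^ ((n : ℝ)⁻¹)) atTop (𝓝 1) := by
      have h2 : Tendsto (fun n : ℕ => ((n : ℝ))⁻¹) atTop (𝓝 0) :=
        tendsto_inv_atTop_nhds_zero_nat
      have h3 : ContinuousAt (fun x : ℝ => C ^ x) 0 :=
        Real.continuousAt_const_rpow (ne_of_gt hC0)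
      have h4 := h3.tendsto.comp h2
      simpa [Function.comp_def, Real.rpow_zero] using h4
    have hev1 : ∀ᶠ n : ℕ in atTop, C ^ ((n : ℝ)⁻¹) < 1 + ε :=
      h1.eventually_lt_const (by linarith)
    have hev2 : ∀ᶠ n : ℕ in atTop, B n < limsup B atTop + ε :=
      eventually_lt_of_limsup_lt (by linarith) hBbdd
    have hev : ∀ᶠ n : ℕ in atTop, A n ≤ (1 + ε) * (limsup B atTop + ε) := by
      filter_upwards [hev1, hev2] with n h1n h2n
      have e0 : (0:ℝ) ≤ ((n : ℝ))⁻¹ := by positivity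
      calc A n ≤ (C * b n) ^ ((n : ℝ)⁻¹) := Real.rpow_le_rpow (ha n) (hab n) e0
        _ = C ^ ((n : ℝ)⁻¹) * B n := Real.mul_rpow hC0.le (hb n)
        _ ≤ (1 + ε) * (limsup B atTop + ε) :=
            mul_le_mul h1n.le h2n.le (hB0 n) (by linarith)
    exact limsup_le_of_le hAcob hev
  by_contra hlt
  push_neg at hlt
  set LA := limsup A atTop
  set LB := limsup B atTop
  have hδ : 0 < LA - LB := sub_pos.mpr hlt
  set ε : ℝ := min 1 ((LA - LB) / (2 * (LB + 2))) with hεdef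
  have hεpos : 0 < ε := lt_min one_pos (by positivity)
  have hε1 : ε ≤ 1 := min_le_left _ _
  have hε2 : ε ≤ (LA - LB) / (2 * (LB + 2)) := min_le_right _ _
  have := key ε hεpos
  have h2 : ε * (LB + 2) ≤ (LA - LB) / 2 := by
    rw [le_div_iff₀ (by positivity)] at hε2
    nlinarith
  nlinarith
end Limsup

section Iterates
variable {F : Type*} [NontriviallyNormedField F]

lemma iterate_add {M : Type*} [AddCommGroup M] {f : M → M}
    (hadd : ∀ x y, f (x + y) = f x + f y) (n : ℕ) :
    ∀ x y, f^[n] (x + y) = f^[n] x + f^[n] y := by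
  induction n with
  | zero => simp
  | succ n ih =>
      intro x y
      rw [Function.iterate_succ_apply', Function.iterate_succ_apply',
        Function.iterate_succ_apply', ih, hadd]

lemma iterate_smul {M : Type*} [AddCommGroup M] [Module F M] {f : M → M} {ψ : F → F}
    (hsmul : ∀ (c : F) (x : M), f (c • x) = ψ c • f x) (n : ℕ) :
    ∀ (c : F) (x : M), f^[n] (c • x) = ψ^[n] c • f^[n] x := by
  induction n with
  | zero => simp
  | succ n ih =>
      intro c x
      rw [Function.iterate_succ_apply', Function.iterate_succ_apply',
        Function.iterate_succ_apply', ih, hsmul]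

lemma iterate_norm {ψ : F → F} (hψ : ∀ c, ‖ψ c‖ = ‖c‖) (n : ℕ) (c : F) :
    ‖ψ^[n] c‖ = ‖c‖ := by
  induction n with
  | zero => simp
  | succ n ih => rw [Function.iterate_succ_apply', hψ, ih]

lemma conj_iterate {M N : Type*} {u : M → N} {fM : M → M} {fN : N → N}
    (hcomm : ∀ x, u (fM x) = fN (u x)) (n : ℕ) (x : M) :
    u (fM^[n] x) = fN^[n] (u x) := by
  induction n with
  | zero => simp
  | succ n ih =>
      rw [Function.iterate_succ_apply', Function.iterate_succ_apply', hcomm, ih]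
end Iterates

section SpRad
variable {F : Type*} [NontriviallyNormedField F]
variable {M N : Type*} [AddCommGroup M] [Module F M] [FiniteDimensional F M]
  [AddCommGroup N] [Module F N] [FiniteDimensional F N]

lemma spRad_le_of_conj (φ : F →+* F) (hφ : ∀ c, ‖φ c‖ = ‖c‖)
    (u : M ≃ₗ[F] N) (fM : M → M) (fN : N → N)
    (hMadd : ∀ x y, fM (x + y) = fM x + fM y)
    (hMsmul : ∀ (c : F) (x : M), fM (c • x) = φ c • fM x)
    (hcomm : ∀ x, u (fM x) = fN (u x)) :
    spRad F fN ≤ spRad F fM := by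
  classical
  set a : ℕ → ℝ := fun n => opN F (fN^[n]) with ha
  set b : ℕ → ℝ := fun n => opN F (fM^[n]) with hb
  -- bounds for iterates of fM
  have BddM : ∀ n : ℕ, ∃ A, 0 ≤ A ∧ ∀ v, supNorm F (fM^[n] v) ≤ A * supNorm F v := by
    intro n
    exact exists_bound F _ ((⇑φ)^[n]) (iterate_add hMadd n) (iterate_smul hMsmul n)
      (fun c => le_of_eq (iterate_norm hφ n c))
  obtain ⟨Au, hAu0, hAu⟩ := exists_bound F (⇑u) id (fun x y => u.map_add x y)
    (fun c x => u.map_smul c x) (fun c => le_rfl)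
  obtain ⟨Av, hAv0, hAv⟩ := exists_bound F (⇑u.symm) id (fun x y => u.symm.map_add x y)
    (fun c x => u.symm.map_smul c x) (fun c => le_rfl)
  have hab0 : ∀ n, a n ≤ (Au * Av) * b n := by
    intro n
    have hpt : ∀ w : N, supNorm F (fN^[n] w) ≤ (Au * (b n * Av)) * supNorm F w := by
      intro w
      have he : fN^[n] w = u (fM^[n] (u.symm w)) := by
        have := conj_iterate hcomm n (u.symm w)
        rw [u.apply_symm_apply] at this
        rw [this]
      rw [he]
      calc supNorm F (u (fM^[n] (u.symm w))) ≤ Au * supNorm F (fM^[n] (u.symm w)) := hAu _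
        _ ≤ Au * (b n * supNorm F (u.symm w)) := by
            have := le_opN F (BddM n).choose_spec.1 (BddM n).choose_spec.2 (u.symm w)
            exact mul_le_mul_of_nonneg_left this hAu0
        _ ≤ Au * (b n * (Av * supNorm F w)) := by
            have h1 := mul_le_mul_of_nonneg_left (hAv w) (opN_nonneg F (fM^[n]))
            exact mul_le_mul_of_nonneg_left h1 hAu0
        _ = (Au * (b n * Av)) * supNorm F w := by ring
    have hbn : 0 ≤ b n := opN_nonneg F _
    have h2 : a n ≤ Au * (b n * Av) :=
      opN_le F (mul_nonneg hAu0 (mul_nonneg hbn hAv0)) hpt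
    calc a n ≤ Au * (b n * Av) := h2
      _ = (Au * Av) * b n := by ring
  obtain ⟨AM, hAM0, hAM⟩ := BddM 1
  have hAM1 : ∀ v, supNorm F (fM v) ≤ AM * supNorm F v := by
    intro v; simpa using hAM v
  have hbD : ∀ n, b n ≤ (max AM 1) ^ n := by
    intro n
    have hpt : ∀ v, supNorm F (fM^[n] v) ≤ AM ^ n * supNorm F v := by
      induction n with
      | zero => intro v; simp
      | succ n ih =>
          intro v
          rw [Function.iterate_succ_apply']
          calc supNorm F (fM (fM^[n] v)) ≤ AM * supNorm F (fM^[n] v) := hAM1 _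
            _ ≤ AM * (AM ^ n * supNorm F v) := mul_le_mul_of_nonneg_left (ih v) hAM0
            _ = AM ^ (n+1) * supNorm F v := by ring
    calc b n ≤ AM ^ n := opN_le F (by positivity) hpt
      _ ≤ (max AM 1) ^ n := pow_le_pow_left₀ hAM0 (le_max_left _ _) n
  have hC1 : (1:ℝ) ≤ max (Au * Av) 1 := le_max_right _ _
  have hab : ∀ n, a n ≤ (max (Au * Av) 1) * b n := by
    intro n
    exact le_trans (hab0 n) (mul_le_mul_of_nonneg_right (le_max_left _ _) (opN_nonneg F _))
  exact limsup_rpow_le a b (fun n => opN_nonneg F _) (fun n => opN_nonneg F _)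
    _ hC1 hab _ (le_max_right _ _) hbD

lemma spRad_eq_of_conj (φ : F →+* F) (hφ : ∀ c, ‖φ c‖ = ‖c‖)
    (u : M ≃ₗ[F] N) (fM : M → M) (fN : N → N)
    (hMadd : ∀ x y, fM (x + y) = fM x + fM y)
    (hMsmul : ∀ (c : F) (x : M), fM (c • x) = φ c • fM x)
    (hNadd : ∀ x y, fN (x + y) = fN x + fN y)
    (hNsmul : ∀ (c : F) (x : N), fN (c • x) = φ c • fN x)
    (hcomm : ∀ x, u (fM x) = fN (u x)) :
    spRad F fM = spRad F fN := by
  have hcomm' : ∀ y, u.symm (fN y) = fM (u.symm y) := by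
    intro y
    have := hcomm (u.symm y)
    rw [u.apply_symm_apply] at this
    have h3 := congrArg u.symm this
    rw [u.symm_apply_apply] at h3
    exact h3.symm
  exact le_antisymm (spRad_le_of_conj φ hφ u.symm fN fM hNadd hNsmul hcomm')
    (spRad_le_of_conj φ hφ u fM fN hMadd hMsmul hcomm)
end SpRad

section Algebra
lemma fin_transition {n : ℕ} (Q : Fin (n + 1) → Prop) (h0 : Q 0) (hlast : ¬ Q (Fin.last n)) :
    ∃ i : Fin n, Q i.castSucc ∧ ¬ Q i.succ := by
  by_contra h
  push_neg at h
  have hall : ∀ i : Fin (n + 1), Q i := by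
    intro i
    induction i using Fin.induction with
    | zero => exact h0
    | succ j ih => exact h j ih
  exact hlast (hall _)

lemma mapSub' {M N : Type*} [AddCommGroup M] [AddCommGroup N] {f : M → N}
    (hadd : ∀ x y, f (x + y) = f x + f y) (x y : M) : f (x - y) = f x - f y := by
  have h0 : f (x - y + y) = f (x - y) + f y := hadd _ _
  rw [sub_add_cancel] at h0
  exact eq_sub_of_add_eq h0.symm

variable {F : Type*} [NontriviallyNormedField F]
variable {M : Type*} [AddCommGroup M] [Module F M]

lemma exists_qFrob (f : M → M) (hadd : ∀ x y, f (x + y) = f x + f y)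
    (N₁ N₂ : Submodule F M)
    (hst1 : ∀ x ∈ N₁, f x ∈ N₁) (hst2 : ∀ x ∈ N₂, f x ∈ N₂) :
    ∃ gq : (↥N₂ ⧸ Submodule.comap N₂.subtype N₁) → (↥N₂ ⧸ Submodule.comap N₂.subtype N₁),
      ∀ x : ↥N₂, gq (Submodule.Quotient.mk x) =
        Submodule.Quotient.mk ⟨f x, hst2 x x.2⟩ := by
  refine ⟨fun q => Quotient.liftOn' q
    (fun x => Submodule.Quotient.mk (⟨f x, hst2 x x.2⟩ : ↥N₂)) ?_, fun x => rfl⟩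
  intro x y hxy
  have hxy' : (x : M) - y ∈ N₁ := by
    have h1 : x - y ∈ Submodule.comap N₂.subtype N₁ := (Submodule.quotientRel_def _).mp hxy
    simpa using h1
  simp only [Submodule.Quotient.eq]
  have h2 : f ((x : M) - y) = f x - f y := mapSub' hadd _ _
  have h3 : f (x : M) - f y ∈ N₁ := h2 ▸ hst1 _ hxy'
  simpa using h3
end Algebra


/-- No nonzero `φ`-equivariant maps between `φ`-modules with disjoint
Frobenius slope multisets. -/
theorem hom_eq_zero_of_disjoint_slopes
    {F : Type*} [NontriviallyNormedField F] [CompleteSpace F]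
    (hdisc : ∃ c0 : ℝ, 1 < c0 ∧ ∀ x : F, x ≠ 0 → ∃ n : ℤ, ‖x‖ = c0 ^ n)
    (φ : F →+* F) (hiso : ∀ x, ‖φ x‖ = ‖x‖)
    (qn : ℝ) (hqn0 : 0 < qn) (hqn1 : qn < 1)
    {M N : Type*} [AddCommGroup M] [Module F M] [FiniteDimensional F M]
    [AddCommGroup N] [Module F N] [FiniteDimensional F N]
    (fM : M → M) (fN : N → N) (hM : IsPhiModule φ fM) (hN : IsPhiModule φ fN)
    (SM SN : Multiset ℝ)
    (hSM : IsSlopeMultiset φ qn fM SM) (hSN : IsSlopeMultiset φ qn fN SN)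
    (hdisj : ∀ lam : ℝ, lam ∈ SM → lam ∉ SN)
    (g : M →ₗ[F] N) (hg : ∀ x, g (fM x) = fN (g x)) :
    g = 0 := by
  classical
  by_contra hg0
  obtain ⟨nM, NM, lamM, hM0, hMlast, hMle, hMstab, hMpureH, hMmax, hSMeq⟩ := hSM
  obtain ⟨nN, NN, lamN, hN0, hNlast, hNle, hNstab, hNpureH, hNmax, hSNeq⟩ := hSN
  -- find the transition index on the M side
  obtain ⟨i, hiker, hinot⟩ := fin_transition (fun k => NM k ≤ LinearMap.ker g)
    (by show NM 0 ≤ LinearMap.ker g; rw [hM0]; exact bot_le)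
    (by
      show ¬ NM (Fin.last nM) ≤ LinearMap.ker g
      rw [hMlast]
      intro h
      apply hg0
      ext x
      simpa using LinearMap.mem_ker.mp (h (Submodule.mem_top (x := x))))
  -- image of the i-th step
  have hPne : Submodule.map g (NM i.succ) ≠ ⊥ := by
    obtain ⟨x, hx1, hx2⟩ := SetLike.not_le_iff_exists.mp hinot
    intro hP
    have h1 : g x ∈ Submodule.map g (NM i.succ) := Submodule.mem_map_of_mem hx1
    rw [hP, Submodule.mem_bot] at h1
    exact hx2 (LinearMap.mem_ker.mpr h1)
  obtain ⟨j, hjno, hjyes⟩ := fin_transition (fun k => ¬ Submodule.map g (NM i.succ) ≤ NN k)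
    (by show ¬ Submodule.map g (NM i.succ) ≤ NN 0; rw [hN0]; simpa [le_bot_iff] using hPne)
    (by show ¬ ¬ Submodule.map g (NM i.succ) ≤ NN (Fin.last nN); rw [hNlast]; simp)
  have hjle : Submodule.map g (NM i.succ) ≤ NN j.succ := not_not.mp hjyes
  -- the induced linear map between the subquotients
  have hg1mem : ∀ x : ↥(NM i.succ), g (x : M) ∈ NN j.succ :=
    fun x => hjle (Submodule.mem_map_of_mem x.2)
  have hcond : Submodule.comap (NM i.succ).subtype (NM i.castSucc) ≤
      LinearMap.ker ((Submodule.comap (NN j.succ).subtype (NN j.castSucc)).mkQ.comp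
        (LinearMap.codRestrict (NN j.succ) (g.comp (NM i.succ).subtype) hg1mem)) := by
    intro x hx
    have h1 : g (x : M) = 0 := LinearMap.mem_ker.mp (hiker (by simpa using hx))
    have h2 : LinearMap.codRestrict (NN j.succ) (g.comp (NM i.succ).subtype) hg1mem x = 0 :=
      Subtype.ext (by exact h1)
    rw [LinearMap.mem_ker, LinearMap.comp_apply, h2, map_zero]
  set hmap := Submodule.liftQ _ _ hcond with hmapdef
  have hmk : ∀ x : ↥(NM i.succ),
      hmap (Submodule.Quotient.mk x) =
        Submodule.Quotient.mk (⟨g (x : M), hg1mem x⟩ : ↥(NN j.succ)) := fun x => rfl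
  -- quotient Frobenii
  obtain ⟨fQM, hfQM⟩ := exists_qFrob fM hM.map_add (NM i.castSucc) (NM i.succ)
    (hMstab i.castSucc) (hMstab i.succ)
  obtain ⟨fQN, hfQN⟩ := exists_qFrob fN hN.map_add (NN j.castSucc) (NN j.succ)
    (hNstab j.castSucc) (hNstab j.succ)
  have hQMadd : ∀ a b, fQM (a + b) = fQM a + fQM b := by
    intro a b
    obtain ⟨x, rfl⟩ := Submodule.Quotient.mk_surjective _ a
    obtain ⟨y, rfl⟩ := Submodule.Quotient.mk_surjective _ b
    rw [← Submodule.Quotient.mk_add, hfQM, hfQM, hfQM, ← Submodule.Quotient.mk_add]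
    exact congrArg _ (Subtype.ext (hM.map_add _ _))
  have hQMsmul : ∀ (c : F) a, fQM (c • a) = φ c • fQM a := by
    intro c a
    obtain ⟨x, rfl⟩ := Submodule.Quotient.mk_surjective _ a
    rw [← Submodule.Quotient.mk_smul, hfQM, hfQM, ← Submodule.Quotient.mk_smul]
    exact congrArg _ (Subtype.ext (by simpa using hM.map_smul c (x : M)))
  have hQNadd : ∀ a b, fQN (a + b) = fQN a + fQN b := by
    intro a b
    obtain ⟨x, rfl⟩ := Submodule.Quotient.mk_surjective _ a
    obtain ⟨y, rfl⟩ := Submodule.Quotient.mk_surjective _ b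
    rw [← Submodule.Quotient.mk_add, hfQN, hfQN, hfQN, ← Submodule.Quotient.mk_add]
    exact congrArg _ (Subtype.ext (hN.map_add _ _))
  have hQNsmul : ∀ (c : F) a, fQN (c • a) = φ c • fQN a := by
    intro c a
    obtain ⟨x, rfl⟩ := Submodule.Quotient.mk_surjective _ a
    rw [← Submodule.Quotient.mk_smul, hfQN, hfQN, ← Submodule.Quotient.mk_smul]
    exact congrArg _ (Subtype.ext (by simpa using hN.map_smul c (x : N)))
  -- equivariance
  have hcomm : ∀ q, hmap (fQM q) = fQN (hmap q) := by
    intro q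
    obtain ⟨x, rfl⟩ := Submodule.Quotient.mk_surjective _ q
    rw [hfQM, hmk, hmk, hfQN]
    exact congrArg _ (Subtype.ext (hg (x : M)))
  -- injectivity
  have hK1 : NM i.castSucc ≤ NM i.succ ⊓ Submodule.comap g (NN j.castSucc) := by
    refine le_inf (hMle i) ?_
    intro x hx
    have h1 : g x = 0 := LinearMap.mem_ker.mp (hiker hx)
    rw [Submodule.mem_comap, h1]
    exact zero_mem _
  have hKst : ∀ x ∈ NM i.succ ⊓ Submodule.comap g (NN j.castSucc),
      fM x ∈ NM i.succ ⊓ Submodule.comap g (NN j.castSucc) := by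
    intro x hx
    rw [Submodule.mem_inf] at hx ⊢
    refine ⟨hMstab i.succ x hx.1, ?_⟩
    rw [Submodule.mem_comap, hg x]
    exact hNstab j.castSucc _ (Submodule.mem_comap.mp hx.2)
  have hKeq : NM i.succ ⊓ Submodule.comap g (NN j.castSucc) = NM i.castSucc := by
    rcases hMmax i _ hK1 inf_le_left hKst with h | h
    · exact h
    · exfalso
      apply hjno
      intro y hy
      obtain ⟨x, hx, rfl⟩ := Submodule.mem_map.mp hy
      have hx' : x ∈ NM i.succ ⊓ Submodule.comap g (NN j.castSucc) := by
        rw [h]; exact hx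
      exact Submodule.mem_comap.mp (Submodule.mem_inf.mp hx').2
  have hinj : Function.Injective hmap := by
    rw [← LinearMap.ker_eq_bot, Submodule.eq_bot_iff]
    intro q hq
    obtain ⟨x, rfl⟩ := Submodule.Quotient.mk_surjective _ q
    rw [LinearMap.mem_ker, hmk, Submodule.Quotient.mk_eq_zero] at hq
    have hx2 : (x : M) ∈ NM i.succ ⊓ Submodule.comap g (NN j.castSucc) :=
      Submodule.mem_inf.mpr ⟨x.2, Submodule.mem_comap.mpr (by simpa using hq)⟩
    rw [hKeq] at hx2
    rw [Submodule.Quotient.mk_eq_zero]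
    simpa using hx2
  -- surjectivity
  have hRst : ∀ x ∈ NN j.castSucc ⊔ Submodule.map g (NM i.succ),
      fN x ∈ NN j.castSucc ⊔ Submodule.map g (NM i.succ) := by
    intro x hx
    rw [Submodule.mem_sup] at hx ⊢
    obtain ⟨y, hy, z, hz, rfl⟩ := hx
    refine ⟨fN y, hNstab j.castSucc y hy, fN z, ?_, (hN.map_add y z).symm⟩
    obtain ⟨m, hm, rfl⟩ := hz
    exact Submodule.mem_map.mpr ⟨fM m, hMstab i.succ m hm, hg m⟩
  have hReq : NN j.castSucc ⊔ Submodule.map g (NM i.succ) = NN j.succ := by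
    rcases hNmax j _ le_sup_left (sup_le (hNle j) hjle) hRst with h | h
    · exact absurd (le_trans le_sup_right h.le) hjno
    · exact h
  have hsurj : Function.Surjective hmap := by
    intro q
    obtain ⟨y, rfl⟩ := Submodule.Quotient.mk_surjective _ q
    have hy : (y : N) ∈ NN j.castSucc ⊔ Submodule.map g (NM i.succ) := by
      rw [hReq]; exact y.2
    rw [Submodule.mem_sup] at hy
    obtain ⟨a, ha, z, hz, hsum⟩ := hy
    obtain ⟨x, hx, rfl⟩ := hz
    refine ⟨Submodule.Quotient.mk ⟨x, hx⟩, ?_⟩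
    rw [hmk, Submodule.Quotient.eq]
    have h5 : g x - (y : N) = -a := by rw [← hsum]; abel
    have h6 : g x - (y : N) ∈ NN j.castSucc := by rw [h5]; exact neg_mem ha
    simpa [Submodule.mem_comap] using h6
  -- purity of the two subquotients
  have hpureM : IsPureOfSlope φ qn fQM (lamM i) := by
    refine hMpureH i fQM ?_
    intro x y hxy
    rw [hfQM]
    exact congrArg _ (Subtype.ext hxy)
  have hpureN : IsPureOfSlope φ qn fQN (lamN j) := by
    refine hNpureH j fQN ?_
    intro x y hxy
    rw [hfQN]
    exact congrArg _ (Subtype.ext hxy)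
  -- transport the spectral radius through the isomorphism
  let e := LinearEquiv.ofBijective hmap ⟨hinj, hsurj⟩
  have hsp : spRad F fQM = spRad F fQN :=
    spRad_eq_of_conj φ hiso e fQM fQN hQMadd hQMsmul hQNadd hQNsmul (fun q => hcomm q)
  have hlam : lamM i = lamN j := by
    have heq : qn ^ (lamM i) = qn ^ (lamN j) := by rw [← hpureM.1, ← hpureN.1, hsp]
    by_contra hne
    rcases lt_or_gt_of_ne hne with h | h
    · have h2 := (Real.rpow_lt_rpow_left_iff_of_base_lt_one hqn0 hqn1).mpr h
      rw [heq] at h2; exact lt_irrefl _ h2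
    · have h2 := (Real.rpow_lt_rpow_left_iff_of_base_lt_one hqn0 hqn1).mpr h
      rw [heq] at h2; exact lt_irrefl _ h2
  -- the slopes occur in the multisets
  obtain ⟨x₀, hx₀1, hx₀2⟩ := SetLike.not_le_iff_exists.mp hinot
  haveI hQMnt : Nontrivial (↥(NM i.succ) ⧸ Submodule.comap (NM i.succ).subtype (NM i.castSucc)) := by
    refine ⟨⟨Submodule.Quotient.mk ⟨x₀, hx₀1⟩, 0, ?_⟩⟩
    rw [Ne, Submodule.Quotient.mk_eq_zero]
    intro hmem
    exact hx₀2 (hiker (by simpa using hmem))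
  obtain ⟨y₀, hy₀1, hy₀2⟩ := SetLike.not_le_iff_exists.mp hjno
  haveI hQNnt : Nontrivial (↥(NN j.succ) ⧸ Submodule.comap (NN j.succ).subtype (NN j.castSucc)) := by
    refine ⟨⟨Submodule.Quotient.mk ⟨y₀, hjle hy₀1⟩, 0, ?_⟩⟩
    rw [Ne, Submodule.Quotient.mk_eq_zero]
    intro hmem
    exact hy₀2 (by simpa using hmem)
  have hmemM : lamM i ∈ SM := by
    rw [hSMeq, Multiset.mem_sum]
    exact ⟨i, Finset.mem_univ i,
      Multiset.mem_replicate.mpr ⟨Module.finrank_pos.ne', rfl⟩⟩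
  have hmemN : lamN j ∈ SN := by
    rw [hSNeq, Multiset.mem_sum]
    exact ⟨j, Finset.mem_univ j,
      Multiset.mem_replicate.mpr ⟨Module.finrank_pos.ne', rfl⟩⟩
  have hmemN' : lamM i ∈ SN := by rw [hlam]; exact hmemN
  exact hdisj (lamM i) hmemM hmemN'


end Stmt7
end
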